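/- Let A ∈ ℝ^{m×n}, let Θ ∈ ℝ^{n×n} be diagonal with strictly positive diagonal entries, let N ⊆ {1,…,n} with complement B, let A_N be the submatrix of columns of A in N and Θ_N the corresponding principal submatrix of Θ. Let S = A_N Θ_N A_Nᵀ, R = off(S), and let δ_d > 0 satisfy δ_d > Σ_{j≠i} |S_{ij}| for every i ∈ {1,…,m}. With K = AΘAᵀ + δ_d I_m, the spectral radius of K^{-1} R is strictly less than 1, and consequently every eigenvalue of K^{-1}(K − R) lies in the open interval (0, 2). -/

import Mathlib

open Matrix

/-- off(B): same off-diagonal entries as B, zero diagonal. -/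
def offDiag {ι : Type*} [DecidableEq ι] (B : Matrix ι ι ℝ) : Matrix ι ι ℝ :=
  B - Matrix.diagonal (fun i => B i i)

/-- Hermitian quadratic form of a complexified real symmetric matrix is real. -/
theorem quadform {m : ℕ} (M : Matrix (Fin m) (Fin m) ℝ) (hM : Mᵀ = M) (x : Fin m → ℂ) :
    star x ⬝ᵥ ((M.map (fun r : ℝ => (r : ℂ))) *ᵥ x) =
      ((((fun i => (x i).re) ⬝ᵥ M *ᵥ fun i => (x i).re) +
       ((fun i => (x i).im) ⬝ᵥ M *ᵥ fun i => (x i).im) : ℝ) : ℂ) := by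
  have hsym : ∀ i j, M i j = M j i := fun i j => congrFun (congrFun hM j) i
  simp only [dotProduct, mulVec, map_apply, Pi.star_apply, Finset.mul_sum]
  apply Complex.ext <;>
    simp only [Complex.re_sum, Complex.im_sum, Complex.add_re, Complex.add_im, Complex.mul_re,
      Complex.mul_im, Complex.ofReal_re, Complex.ofReal_im, Complex.ofReal_sum, Complex.star_def,
      Complex.conj_re, Complex.conj_im]
  · rw [← Finset.sum_add_distrib]
    refine Finset.sum_congr rfl fun i _ => ?_
    rw [← Finset.sum_add_distrib]
    exact Finset.sum_congr rfl fun j _ => by ring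
  · have h1 : ∑ i, ∑ j, (x i).im * (M i j * (x j).re) =
        ∑ i, ∑ j, (x i).re * (M i j * (x j).im) := by
      rw [Finset.sum_comm]
      refine Finset.sum_congr rfl fun i _ => Finset.sum_congr rfl fun j _ => ?_
      rw [hsym j i]; ring
    calc ∑ i, ∑ j, ((x i).re * (M i j * (x j).im + 0 * (x j).re) +
          -(x i).im * (M i j * (x j).re - 0 * (x j).im))
        = ∑ i, ∑ j, (x i).re * (M i j * (x j).im) - ∑ i, ∑ j, (x i).im * (M i j * (x j).re) := by
          rw [← Finset.sum_sub_distrib]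
          refine Finset.sum_congr rfl fun i _ => ?_
          rw [← Finset.sum_sub_distrib]
          exact Finset.sum_congr rfl fun j _ => by ring
      _ = 0 := by rw [h1, sub_self]

/-- Quadratic form bound by weighted diagonal sums. -/
theorem absquad {m : ℕ} (R : Matrix (Fin m) (Fin m) ℝ) (hR : Rᵀ = R) (y : Fin m → ℝ) :
    |y ⬝ᵥ R *ᵥ y| ≤ ∑ i, (∑ j, |R i j|) * y i ^ 2 := by
  have hsym : ∀ i j, R i j = R j i := fun i j => congrFun (congrFun hR j) i
  have h1 : |y ⬝ᵥ R *ᵥ y| ≤ ∑ i, ∑ j, |R i j| * (|y i| * |y j|) := by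
    rw [dotProduct]
    refine le_trans (Finset.abs_sum_le_sum_abs _ _) (Finset.sum_le_sum fun i _ => ?_)
    rw [mulVec, dotProduct, Finset.mul_sum]
    refine le_trans (Finset.abs_sum_le_sum_abs _ _) (Finset.sum_le_sum fun j _ => ?_)
    exact le_of_eq (by rw [abs_mul, abs_mul]; ring)
  refine h1.trans ?_
  calc ∑ i, ∑ j, |R i j| * (|y i| * |y j|)
      ≤ ∑ i, ∑ j, |R i j| * ((y i ^ 2 + y j ^ 2) / 2) := by
        refine Finset.sum_le_sum fun i _ => Finset.sum_le_sum fun j _ => ?_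
        refine mul_le_mul_of_nonneg_left ?_ (abs_nonneg _)
        nlinarith [sq_abs (y i), sq_abs (y j), sq_nonneg (|y i| - |y j|)]
    _ = ∑ i, (∑ j, |R i j|) * y i ^ 2 := by
        have expand : ∀ i j : Fin m, |R i j| * ((y i ^ 2 + y j ^ 2) / 2)
            = |R i j| * y i ^ 2 / 2 + |R i j| * y j ^ 2 / 2 := fun i j => by ring
        simp only [expand, Finset.sum_add_distrib]
        have hswap : ∑ i, ∑ j, |R i j| * y j ^ 2 / 2 = ∑ i, ∑ j, |R i j| * y i ^ 2 / 2 := by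
          rw [Finset.sum_comm]
          exact Finset.sum_congr rfl fun i _ => Finset.sum_congr rfl fun j _ => by
            rw [hsym j i]
        rw [hswap]
        simp only [Finset.sum_mul, ← Finset.sum_div, ← Finset.sum_add_distrib]
        exact add_halves _

/-- With `S = A_N Θ_N A_Nᵀ`, `R = off(S)`, `δ_d > 0` strictly dominating the off-diagonal
row sums of `S`, and `K = AΘAᵀ + δ_d I`: the spectral radius of `K⁻¹R` is strictly
less than 1 (every complex eigenvalue has modulus < 1), and consequently every
eigenvalue of `K⁻¹(K − R)` lies in the open interval (0, 2). -/
theorem stmt_5 {m n : ℕ} (A : Matrix (Fin m) (Fin n) ℝ)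
    (d : Fin n → ℝ) (hd : ∀ j, 0 < d j)
    (N : Finset (Fin n))
    (AN : Matrix (Fin m) {j // j ∈ N} ℝ)
    (hAN : AN = A.submatrix id (fun j : {j // j ∈ N} => (j : Fin n)))
    (ThetaN : Matrix {j // j ∈ N} {j // j ∈ N} ℝ)
    (hThetaN : ThetaN = Matrix.diagonal (fun j : {j // j ∈ N} => d j))
    (δd : ℝ) (hδd : 0 < δd)
    (S R K : Matrix (Fin m) (Fin m) ℝ)
    (hS : S = AN * ThetaN * ANᵀ)
    (hR : R = offDiag S)
    (hdom : ∀ i : Fin m, ∑ j ∈ Finset.univ.erase i, |S i j| < δd)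
    (hK : K = A * Matrix.diagonal d * Aᵀ + δd • (1 : Matrix (Fin m) (Fin m) ℝ)) :
    (∀ μ : ℂ, ∀ x : Fin m → ℂ, x ≠ 0 →
        ((K⁻¹ * R).map (fun r : ℝ => (r : ℂ))).mulVec x = μ • x → ‖μ‖ < 1) ∧
    (∀ μ : ℂ, ∀ x : Fin m → ℂ, x ≠ 0 →
        ((K⁻¹ * (K - R)).map (fun r : ℝ => (r : ℂ))).mulVec x = μ • x →
        μ.im = 0 ∧ 0 < μ.re ∧ μ.re < 2) := by
  -- symmetry facts
  have hSsym : Sᵀ = S := by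
    rw [hS, hThetaN]
    simp [Matrix.transpose_mul, Matrix.mul_assoc]
  have hRsym : Rᵀ = R := by
    rw [hR]
    unfold offDiag
    rw [transpose_sub, hSsym, Matrix.diagonal_transpose]
  have hKsym : Kᵀ = K := by
    rw [hK]
    simp [Matrix.transpose_mul, Matrix.mul_assoc]
  have hRdiag : ∀ i, R i i = 0 := by
    intro i; simp [hR, offDiag, Matrix.sub_apply]
  have hRoff : ∀ i j, i ≠ j → R i j = S i j := by
    intro i j hij
    simp [hR, offDiag, Matrix.sub_apply, Matrix.diagonal_apply_ne' _ (Ne.symm hij)]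
  -- row sums of |R| are < δd
  have hw : ∀ i, ∑ j, |R i j| < δd := by
    intro i
    have : ∑ j, |R i j| = ∑ j ∈ Finset.univ.erase i, |S i j| := by
      rw [← Finset.add_sum_erase _ _ (Finset.mem_univ i), hRdiag i, abs_zero, zero_add]
      exact Finset.sum_congr rfl fun j hj =>
        by rw [hRoff i j (Ne.symm (Finset.ne_of_mem_erase hj))]
    rw [this]; exact hdom i
  -- K quadratic form lower bound
  have hP : (A * Matrix.diagonal d * Aᵀ).PosSemidef := by
    have h1 : (Matrix.diagonal d).PosSemidef := Matrix.PosSemidef.diagonal (fun j => (hd j).le)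
    have := h1.mul_mul_conjTranspose_same A
    rwa [Matrix.conjTranspose_eq_transpose_of_trivial] at this
  have hKq : ∀ y : Fin m → ℝ, δd * ∑ i, y i ^ 2 ≤ y ⬝ᵥ K *ᵥ y := by
    intro y
    have h0 : (0 : ℝ) ≤ y ⬝ᵥ (A * Matrix.diagonal d * Aᵀ) *ᵥ y := by
      have := hP.dotProduct_mulVec_nonneg y
      rwa [star_trivial] at this
    have h1 : y ⬝ᵥ (δd • (1 : Matrix (Fin m) (Fin m) ℝ)) *ᵥ y = δd * ∑ i, y i ^ 2 := by
      rw [smul_mulVec, one_mulVec, dotProduct_smul, smul_eq_mul, dotProduct]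
      congr 1
      exact Finset.sum_congr rfl fun i _ => (sq (y i)).symm
    rw [hK, Matrix.add_mulVec, dotProduct_add, h1]
    linarith
  -- K is positive definite, hence invertible
  have hKpd : K.PosDef := by
    refine Matrix.PosDef.of_dotProduct_mulVec_pos ?_ (fun y hy => ?_)
    · rw [Matrix.IsHermitian, Matrix.conjTranspose_eq_transpose_of_trivial, hKsym]
    · rw [star_trivial]
      obtain ⟨k, hk⟩ := Function.ne_iff.mp hy
      have hpos : 0 < ∑ i, y i ^ 2 :=
        Finset.sum_pos' (fun i _ => sq_nonneg _) ⟨k, Finset.mem_univ k, pow_two_pos_of_ne_zero hk⟩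
      have := hKq y
      nlinarith
  have hdet : IsUnit K.det := hKpd.det_pos.ne'.isUnit
  -- the core spectral estimate
  have core : ∀ ν : ℂ, ∀ x : Fin m → ℂ, x ≠ 0 →
      (R.map (fun r : ℝ => (r : ℂ))) *ᵥ x = ν • ((K.map (fun r : ℝ => (r : ℂ))) *ᵥ x) →
      ν.im = 0 ∧ |ν.re| < 1 := by
    intro ν x hx0 heq
    set u : Fin m → ℝ := fun i => (x i).re with hu
    set v : Fin m → ℝ := fun i => (x i).im with hv
    set qR : ℝ := u ⬝ᵥ R *ᵥ u + v ⬝ᵥ R *ᵥ v with hqR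
    set qK : ℝ := u ⬝ᵥ K *ᵥ u + v ⬝ᵥ K *ᵥ v with hqK
    -- strict inequality |qR| < qK
    obtain ⟨k, hk⟩ := Function.ne_iff.mp hx0
    have ht : ∀ i, 0 ≤ u i ^ 2 + v i ^ 2 := fun i => by positivity
    have htk : 0 < u k ^ 2 + v k ^ 2 := by
      have := Complex.normSq_pos.mpr hk
      rw [Complex.normSq_apply] at this
      simp only [hu, hv]
      nlinarith
    have hsum : 0 < ∑ i, (u i ^ 2 + v i ^ 2) :=
      Finset.sum_pos' (fun i _ => ht i) ⟨k, Finset.mem_univ k, htk⟩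
    have habs : |qR| < qK := by
      have h1 : |qR| ≤ ∑ i, (∑ j, |R i j|) * (u i ^ 2 + v i ^ 2) := by
        calc |qR| ≤ |u ⬝ᵥ R *ᵥ u| + |v ⬝ᵥ R *ᵥ v| := abs_add_le _ _
          _ ≤ ∑ i, (∑ j, |R i j|) * u i ^ 2 + ∑ i, (∑ j, |R i j|) * v i ^ 2 :=
              add_le_add (absquad R hRsym u) (absquad R hRsym v)
          _ = ∑ i, (∑ j, |R i j|) * (u i ^ 2 + v i ^ 2) := by
              rw [← Finset.sum_add_distrib]
              exact Finset.sum_congr rfl fun i _ => by ring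
      have h2 : ∑ i, (∑ j, |R i j|) * (u i ^ 2 + v i ^ 2) < δd * ∑ i, (u i ^ 2 + v i ^ 2) := by
        rw [Finset.mul_sum]
        refine Finset.sum_lt_sum (fun i _ => mul_le_mul_of_nonneg_right (hw i).le (ht i))
          ⟨k, Finset.mem_univ k, (mul_lt_mul_of_pos_right (hw k) htk)⟩
      have h3 : δd * ∑ i, (u i ^ 2 + v i ^ 2) ≤ qK := by
        have := hKq u
        have := hKq v
        rw [Finset.sum_add_distrib, mul_add]
        linarith
      linarith
    have hqKpos : 0 < qK := lt_of_le_of_lt (abs_nonneg _) habs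
    -- complex identity : (qR : ℂ) = ν * qK
    have hiden : (qR : ℂ) = ν * (qK : ℂ) := by
      have hL := quadform R hRsym x
      have hKf := quadform K hKsym x
      calc (qR : ℂ) = star x ⬝ᵥ (R.map (fun r : ℝ => (r : ℂ))) *ᵥ x := hL.symm
        _ = star x ⬝ᵥ ν • ((K.map (fun r : ℝ => (r : ℂ))) *ᵥ x) := by rw [heq]
        _ = ν * (star x ⬝ᵥ (K.map (fun r : ℝ => (r : ℂ))) *ᵥ x) := by
            rw [dotProduct_smul, smul_eq_mul]
        _ = ν * (qK : ℂ) := by rw [hKf]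
    have hν : ν = ((qR / qK : ℝ) : ℂ) := by
      have hqK0 : ((qK : ℝ) : ℂ) ≠ 0 := Complex.ofReal_ne_zero.mpr hqKpos.ne'
      rw [Complex.ofReal_div, eq_div_iff hqK0, hiden]
    constructor
    · rw [hν]; exact Complex.ofReal_im _
    · rw [hν, Complex.ofReal_re, abs_div, abs_of_pos hqKpos, div_lt_one hqKpos]
      exact habs
  -- relating the eigen-equations to the core estimate
  have hmulK : ∀ x : Fin m → ℂ,
      (K.map (fun r : ℝ => (r : ℂ))) *ᵥ (((K⁻¹ * R).map (fun r : ℝ => (r : ℂ))) *ᵥ x)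
        = (R.map (fun r : ℝ => (r : ℂ))) *ᵥ x := by
    intro x
    rw [mulVec_mulVec]
    congr 1
    rw [show (fun r : ℝ => (r : ℂ)) = ⇑(algebraMap ℝ ℂ) from rfl, ← Matrix.map_mul,
      ← Matrix.mul_assoc, Matrix.mul_nonsing_inv K hdet, Matrix.one_mul]
  constructor
  · intro μ x hx0 hx
    have heq : (R.map (fun r : ℝ => (r : ℂ))) *ᵥ x
        = μ • ((K.map (fun r : ℝ => (r : ℂ))) *ᵥ x) := by
      rw [← hmulK x, hx, mulVec_smul]
    obtain ⟨him, habs⟩ := core μ x hx0 heq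
    have : μ = ((μ.re : ℝ) : ℂ) := Complex.ext rfl (by rw [Complex.ofReal_im]; exact him)
    rw [this, Complex.norm_real, Real.norm_eq_abs]
    exact habs
  · intro μ x hx0 hx
    have hsplit : K⁻¹ * (K - R) = 1 - K⁻¹ * R := by
      rw [Matrix.mul_sub, Matrix.nonsing_inv_mul K hdet]
    rw [hsplit] at hx
    have hx' : ((K⁻¹ * R).map (fun r : ℝ => (r : ℂ))) *ᵥ x = (1 - μ) • x := by
      have h1 : ((1 - K⁻¹ * R).map (fun r : ℝ => (r : ℂ))) *ᵥ x
          = x - ((K⁻¹ * R).map (fun r : ℝ => (r : ℂ))) *ᵥ x := by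
        rw [Matrix.map_sub _ (by push_cast; intro a b; ring), Matrix.sub_mulVec,
          Matrix.map_one _ (by norm_num) (by norm_num), Matrix.one_mulVec]
      rw [h1] at hx
      have h2 := sub_eq_iff_eq_add.mp hx
      rw [sub_smul, one_smul]
      exact eq_sub_of_add_eq (by rw [add_comm]; exact h2.symm)
    have heq : (R.map (fun r : ℝ => (r : ℂ))) *ᵥ x
        = (1 - μ) • ((K.map (fun r : ℝ => (r : ℂ))) *ᵥ x) := by
      rw [← hmulK x, hx', mulVec_smul]
    obtain ⟨him, habs⟩ := core (1 - μ) x hx0 heq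
    simp only [Complex.sub_im, Complex.one_im, Complex.sub_re, Complex.one_re, zero_sub,
      neg_eq_zero] at him habs
    rw [abs_lt] at habs
    exact ⟨him, by linarith [habs.1, habs.2], by linarith [habs.1, habs.2]⟩
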